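/- Let (ξ,η) and (ξ̃,η̃) in ({-1,1}^ℤ)² agree on all indices i with |i| > K, and suppose ξ(i) = η(i) = 1 for all |i| ≤ K. Let (Xₙ,Yₘ) and (X̃ₙ,Ỹₘ) be the associated partial-sum walks. Then for all n ≥ K and all m ≥ 0, ⌈(Xₙ+Yₘ)/2⌉ ≥ ⌈(X̃ₙ+Ỹₘ)/2⌉; and for all n ≤ −K and m ≤ 0, ⌈(Xₙ+Yₘ)/2⌉ ≤ ⌈(X̃ₙ+Ỹₘ)/2⌉. -/

import Mathlib

/-- The two-sided partial-sum walk of a sequence `s : ℤ → ℤ`. -/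
noncomputable def walk (s : ℤ → ℤ) (n : ℤ) : ℤ :=
  if 0 ≤ n then ∑ i ∈ Finset.Icc 1 n, s i else - ∑ i ∈ Finset.Icc (n + 1) 0, s i

lemma walk_le_walk_of_nonneg {s t : ℤ → ℤ} (h : ∀ i, s i ≤ t i) {n : ℤ} (hn : 0 ≤ n) :
    walk s n ≤ walk t n := by
  simp only [walk, if_pos hn]
  exact Finset.sum_le_sum fun i _ => h i

lemma walk_le_walk_of_nonpos {s t : ℤ → ℤ} {n : ℤ}
    (h : ∀ i, n + 1 ≤ i → i ≤ 0 → t i ≤ s i) (hn : n ≤ 0) :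
    walk s n ≤ walk t n := by
  rcases eq_or_lt_of_le hn with rfl | hn'
  · simp [walk]
  · simp only [walk, if_neg (not_le.mpr hn')]
    have : ∑ i ∈ Finset.Icc (n + 1) 0, t i ≤ ∑ i ∈ Finset.Icc (n + 1) 0, s i := by
      refine Finset.sum_le_sum fun i hi => ?_
      rw [Finset.mem_Icc] at hi
      exact h i hi.1 hi.2
    omega

lemma ceil_half_mono {a b : ℤ} (h : a ≤ b) :
    ⌈((a : ℤ) : ℚ) / 2⌉ ≤ ⌈((b : ℤ) : ℚ) / 2⌉ := by
  apply Int.ceil_le_ceil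
  have : (a : ℚ) ≤ (b : ℚ) := by exact_mod_cast h
  linarith

/-- Monotonicity of the height under maximizing the block `⟦-K,K⟧`: if `(ξ,η)` and
`(ξ',η')` are `±1`-sequences agreeing outside `⟦-K,K⟧`, and `(ξ,η)` is identically `1`
on `⟦-K,K⟧`, then for `n ≥ K`, `m ≥ 0` the height `⌈(Xₙ+Yₘ)/2⌉` computed from `(ξ,η)`
dominates the one computed from `(ξ',η')`, and the reverse inequality holds for
`n ≤ -K`, `m ≤ 0`. -/
theorem stmt_8 (K : ℤ) (ξ η ξ' η' : ℤ → ℤ)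
    (hξ : ∀ i, ξ i = 1 ∨ ξ i = -1) (hη : ∀ i, η i = 1 ∨ η i = -1)
    (hξ' : ∀ i, ξ' i = 1 ∨ ξ' i = -1) (hη' : ∀ i, η' i = 1 ∨ η' i = -1)
    (hout : ∀ i : ℤ, K < |i| → ξ i = ξ' i ∧ η i = η' i)
    (hblock : ∀ i : ℤ, |i| ≤ K → ξ i = 1 ∧ η i = 1) :
    (∀ n m : ℤ, n ≥ K → m ≥ 0 →
      ⌈((walk ξ n + walk η m : ℤ) : ℚ) / 2⌉ ≥ ⌈((walk ξ' n + walk η' m : ℤ) : ℚ) / 2⌉) ∧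
    (∀ n m : ℤ, n ≤ -K → m ≤ 0 →
      ⌈((walk ξ n + walk η m : ℤ) : ℚ) / 2⌉ ≤ ⌈((walk ξ' n + walk η' m : ℤ) : ℚ) / 2⌉) := by
  -- pointwise: ξ' ≤ ξ and η' ≤ η
  have hpξ : ∀ i, ξ' i ≤ ξ i := by
    intro i
    rcases le_or_gt |i| K with h | h
    · rcases hξ' i with h' | h' <;> rw [h', (hblock i h).1] <;> omega
    · rw [(hout i h).1]
  have hpη : ∀ i, η' i ≤ η i := by
    intro i
    rcases le_or_gt |i| K with h | h
    · rcases hη' i with h' | h' <;> rw [h', (hblock i h).2] <;> omega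
    · rw [(hout i h).2]
  constructor
  · intro n m hn hm
    apply ceil_half_mono
    have h1 : walk ξ' n ≤ walk ξ n := by
      rcases le_or_gt 0 n with h0 | h0
      · exact walk_le_walk_of_nonneg hpξ h0
      · -- n < 0, so K ≤ n < 0 ; on the range, indices i satisfy |i| > K
        apply walk_le_walk_of_nonpos _ (le_of_lt h0)
        intro i hi1 hi2
        have habs : |i| = -i := abs_of_nonpos hi2
        exact le_of_eq ((hout i (by omega)).1)
    have h2 : walk η' m ≤ walk η m := walk_le_walk_of_nonneg hpη hm
    omega
  · intro n m hn hm
    apply ceil_half_mono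
    have h1 : walk ξ n ≤ walk ξ' n := by
      rcases le_or_gt 0 n with h0 | h0
      · -- n ≥ 0 and n ≤ -K : indices 1 ≤ i ≤ n have |i| = i ≤ -K, and i ≥ 1 > K? need |i|>K
        simp only [walk, if_pos h0]
        apply Finset.sum_le_sum
        intro i hi
        rw [Finset.mem_Icc] at hi
        have habs : |i| = i := abs_of_nonneg (by omega)
        exact le_of_eq ((hout i (by omega)).1)
      · exact walk_le_walk_of_nonpos (fun i _ _ => hpξ i) (le_of_lt h0)
    have h2 : walk η m ≤ walk η' m := walk_le_walk_of_nonpos (fun i _ _ => hpη i) hm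
    omega
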